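/- (Fused Zamolodchikov–Faddeev relation.) Let I ≥ 1 be an integer and 0 < q < 1. For all x, y ∈ ℂ \ {0} such that (x/y)·q^m ≠ 1 for every integer m with −I ≤ m ≤ I, and all integers 0 ≤ c, d ≤ I, the following identity holds in A: M^I_c(y) · M^I_d(x) = Σ_{a,b=0}^{I} R^I(x/y)_{b,a}^{d,c} · M^I_b(x) · M^I_a(y). -/

import Mathlib

open scoped Matrix ComplexOrder

noncomputable section

/-- Entries `R(u)_{a,b}^{c,d}` of the unfused stochastic six-vertex `R`-matrix. -/
def Rent (q u : ℂ) (a b c d : Fin 2) : ℂ :=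
  if a = 0 ∧ b = 0 ∧ c = 0 ∧ d = 0 then 1
  else if a = 1 ∧ b = 1 ∧ c = 1 ∧ d = 1 then 1
  else if a = 0 ∧ b = 1 ∧ c = 0 ∧ d = 1 then q * (1 - u) / (1 - q * u)
  else if a = 0 ∧ b = 1 ∧ c = 1 ∧ d = 0 then (1 - q) / (1 - q * u)
  else if a = 1 ∧ b = 0 ∧ c = 0 ∧ d = 1 then u * (1 - q) / (1 - q * u)
  else if a = 1 ∧ b = 0 ∧ c = 1 ∧ d = 0 then (1 - u) / (1 - q * u)
  else 0

/-- The unfused `R`-matrix as an operator (matrix) on `ℂ² ⊗ ℂ²`;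
row index `(c,d)` (output), column index `(a,b)` (input), so that
`R(u)(e_a ⊗ e_b) = Σ_{c,d} R(u)_{a,b}^{c,d} e_c ⊗ e_d`. -/
def Rmat (q u : ℂ) : Matrix (Fin 2 × Fin 2) (Fin 2 × Fin 2) ℂ :=
  fun cd ab => Rent q u ab.1 ab.2 cd.1 cd.2

/-- Entries `K(u)_a^d` of the unfused boundary `K`-matrix, parameters `fa = 𝔞`, `fc = 𝔠`. -/
def Kent (fa fc u : ℂ) (a d : Fin 2) : ℂ :=
  if a = 0 ∧ d = 0 then ((fc - fa) * u ^ 2 + u) / (fc * u ^ 2 + u - fa)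
  else if a = 0 ∧ d = 1 then fa * (u ^ 2 - 1) / (fc * u ^ 2 + u - fa)
  else if a = 1 ∧ d = 0 then fc * (u ^ 2 - 1) / (fc * u ^ 2 + u - fa)
  else (fc - fa + u) / (fc * u ^ 2 + u - fa)

/-- The unfused `K`-matrix as an operator on `ℂ²`: row `d` (output), column `a` (input). -/
def Kmat (fa fc u : ℂ) : Matrix (Fin 2) (Fin 2) ℂ := fun d a => Kent fa fc u a d

/-- Entries `K̄(u)_b^c` of the unfused boundary `K̄`-matrix, parameters `fb = 𝔟`, `fd = 𝔡`. -/
def Kbent (fb fd u : ℂ) (b c : Fin 2) : ℂ :=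
  if b = 0 ∧ c = 0 then ((fb - fd) * u ^ 2 - u) / (fb * u ^ 2 - u - fd)
  else if b = 0 ∧ c = 1 then fd * (u ^ 2 - 1) / (fb * u ^ 2 - u - fd)
  else if b = 1 ∧ c = 0 then fb * (u ^ 2 - 1) / (fb * u ^ 2 - u - fd)
  else (fb - fd - u) / (fb * u ^ 2 - u - fd)

/-- The operator `P` on `ℂ² ⊗ ℂ²` swapping the two tensor factors. -/
def swapMat : Matrix (Fin 2 × Fin 2) (Fin 2 × Fin 2) ℂ :=
  fun p r => if p.1 = r.2 ∧ p.2 = r.1 then 1 else 0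

/-- `Ř(u) = P ∘ R(u)`. -/
def RcheckMat (q u : ℂ) : Matrix (Fin 2 × Fin 2) (Fin 2 × Fin 2) ℂ := swapMat * Rmat q u

/-- A two-site operator `T` placed at sites `i, j` of an `n`-fold tensor power of `ℂ²`,
acting as the identity on the other factors.  Here `(ℂ²)^{⊗n}` is identified with the
function space `(Fin n → Fin 2) → ℂ` with its standard basis. -/
def emb2 {n : ℕ} (i j : Fin n) (T : Matrix (Fin 2 × Fin 2) (Fin 2 × Fin 2) ℂ) :
    Matrix (Fin n → Fin 2) (Fin n → Fin 2) ℂ :=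
  fun x y => T (x i, x j) (y i, y j) * (if ∀ k, k ≠ i → k ≠ j → x k = y k then 1 else 0)

/-- A one-site operator `T` placed at site `i` of an `n`-fold tensor power of `ℂ²`. -/
def emb1 {n : ℕ} (i : Fin n) (T : Matrix (Fin 2) (Fin 2) ℂ) :
    Matrix (Fin n → Fin 2) (Fin n → Fin 2) ℂ :=
  fun x y => T (x i) (y i) * (if ∀ k, k ≠ i → x k = y k then 1 else 0)

/-- The permutation operator `P_ω` on `(ℂ²)^{⊗n}`: it puts the `k`-th factor in position `ω(k)`. -/
def permMat (n : ℕ) (ω : Equiv.Perm (Fin n)) :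
    Matrix (Fin n → Fin 2) (Fin n → Fin 2) ℂ :=
  fun x y => if (fun k => x (ω k)) = y then 1 else 0

/-- `inv(a)` : the number of inversions of a `{0,1}`-word. -/
def invCount {I : ℕ} (x : Fin I → Fin 2) : ℕ :=
  (Finset.univ.filter (fun p : Fin I × Fin I => p.1 < p.2 ∧ x p.2 < x p.1)).card

/-- `Z_q(I;m)`. -/
def Zq (I : ℕ) (q : ℂ) (m : ℕ) : ℂ :=
  ∑ x ∈ Finset.univ.filter (fun x : Fin I → Fin 2 => (∑ j, ((x j : ℕ))) = m),
    q ^ invCount x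

/-- The projection `Π : (ℂ²)^{⊗I} → ℂ^{I+1}`, `e_{a₁…a_I} ↦ e_{Σ a_j}`. -/
def PiMat (I : ℕ) : Matrix (Fin (I + 1)) (Fin I → Fin 2) ℂ :=
  fun m x => if (∑ j, ((x j : ℕ))) = (m : ℕ) then 1 else 0

/-- The injection `Π̂ : ℂ^{I+1} → (ℂ²)^{⊗I}`. -/
def hatPiMat (I : ℕ) (q : ℂ) : Matrix (Fin I → Fin 2) (Fin (I + 1)) ℂ :=
  fun x m => if (∑ j, ((x j : ℕ))) = (m : ℕ) then q ^ invCount x / Zq I q (m : ℕ) else 0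

/-- `F = Π̂ ∘ Π`, the projector onto the `q`-exchangeable subspace. -/
def Fmat (I : ℕ) (q : ℂ) : Matrix (Fin I → Fin 2) (Fin I → Fin 2) ℂ :=
  hatPiMat I q * PiMat I

/-- Restriction of a configuration on `2I` sites to the first `I` sites. -/
def firstHalf {I : ℕ} (x : Fin (2 * I) → Fin 2) : Fin I → Fin 2 :=
  fun k => x ⟨k.1, by have := k.isLt; omega⟩

/-- Restriction of a configuration on `2I` sites to the last `I` sites. -/
def secondHalf {I : ℕ} (x : Fin (2 * I) → Fin 2) : Fin I → Fin 2 :=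
  fun k => x ⟨k.1 + I, by have := k.isLt; omega⟩

/-- `F ⊗ F` acting on `(ℂ²)^{⊗2I}`. -/
def FFmat (I : ℕ) (q : ℂ) : Matrix (Fin (2 * I) → Fin 2) (Fin (2 * I) → Fin 2) ℂ :=
  fun x y => Fmat I q (firstHalf x) (firstHalf y) * Fmat I q (secondHalf x) (secondHalf y)

/-- `Π ⊗ Π : (ℂ²)^{⊗2I} → ℂ^{I+1} ⊗ ℂ^{I+1}`. -/
def PiPiMat (I : ℕ) : Matrix (Fin (I + 1) × Fin (I + 1)) (Fin (2 * I) → Fin 2) ℂ :=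
  fun p x => PiMat I p.1 (firstHalf x) * PiMat I p.2 (secondHalf x)

/-- `Π̂ ⊗ Π̂ : ℂ^{I+1} ⊗ ℂ^{I+1} → (ℂ²)^{⊗2I}`. -/
def hatPiPiMat (I : ℕ) (q : ℂ) : Matrix (Fin (2 * I) → Fin 2) (Fin (I + 1) × Fin (I + 1)) ℂ :=
  fun x p => hatPiMat I q (firstHalf x) p.1 * hatPiMat I q (secondHalf x) p.2

/-- The fused bulk operator `R̊^I(u)` on `(ℂ²)^{⊗2I}` : the ordered product (composition,
factors written from left to right) over `a = I, I-1, …, 1` and, inside, `b = 1, 2, …, I`,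
of the operators `R(u q^{b-a})_{b, a+I}` (sites are 1-based; here `a = I - a'`, `b = b' + 1`). -/
def Rring (I : ℕ) (q u : ℂ) : Matrix (Fin (2 * I) → Fin 2) (Fin (2 * I) → Fin 2) ℂ :=
  ((List.finRange I).map (fun a' =>
    ((List.finRange I).map (fun b' =>
      emb2 (⟨b'.1, by have := b'.isLt; omega⟩ : Fin (2 * I))
        ⟨2 * I - 1 - a'.1, by have := a'.isLt; omega⟩
        (Rmat q (u * q ^ (((b'.1 : ℤ) + 1) - ((I : ℤ) - (a'.1 : ℤ))))))).prod)).prod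

/-- The fused `R`-matrix `R^I(u) = (Π⊗Π) ∘ R̊^I(u) ∘ (Π̂⊗Π̂)` on `ℂ^{I+1} ⊗ ℂ^{I+1}`;
its entry at row `(c,d)`, column `(a,b)` is `R^I(u)_{a,b}^{c,d}`. -/
def RI (I : ℕ) (q u : ℂ) :
    Matrix (Fin (I + 1) × Fin (I + 1)) (Fin (I + 1) × Fin (I + 1)) ℂ :=
  PiPiMat I * Rring I q u * hatPiPiMat I q

/-- Real powers of a positive real number, viewed in `ℂ`. -/
def qrpow (q : ℝ) (r : ℝ) : ℂ := ((q ^ r : ℝ) : ℂ)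

/-- The fused boundary operator `K̊^I(u)` on `(ℂ²)^{⊗I}` : `P_rev` composed with the ordered
product over `a = I, …, 1` of `K(u q^{(I+1)/2-a})_a` composed with the ordered product over
`b = a-1, …, 1` of `R(u² q^{I+1-a-b})_{b,a}` (sites 1-based; `a = I - a'`, `b = a - 1 - b'`). -/
def Kring (I : ℕ) (q : ℝ) (fa fc : ℂ) (u : ℂ) :
    Matrix (Fin I → Fin 2) (Fin I → Fin 2) ℂ :=
  permMat I (Fin.revPerm) *
  ((List.finRange I).map (fun a' =>
    emb1 (⟨I - 1 - a'.1, by have := a'.isLt; omega⟩ : Fin I)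
        (Kmat fa fc (u * qrpow q (((I : ℝ) + 1) / 2 - ((I : ℝ) - (a'.1 : ℝ))))) *
    ((List.finRange (I - 1 - a'.1)).map (fun b' =>
      emb2 (⟨I - a'.1 - 2 - b'.1, by have := a'.isLt; have := b'.isLt; omega⟩ : Fin I)
        ⟨I - 1 - a'.1, by have := a'.isLt; omega⟩
        (Rmat (q : ℂ)
          (u ^ 2 * (q : ℂ) ^ (((I : ℤ) + 1) - ((I : ℤ) - (a'.1 : ℤ)) -
            ((I : ℤ) - (a'.1 : ℤ) - 1 - (b'.1 : ℤ))))))).prod)).prod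

/-- The fused `K`-matrix `K^I(u) = Π ∘ K̊^I(u) ∘ Π̂` on `ℂ^{I+1}`;
its entry at row `d`, column `a` is `K^I(u)_a^d`. -/
def KI (I : ℕ) (q : ℝ) (fa fc u : ℂ) : Matrix (Fin (I + 1)) (Fin (I + 1)) ℂ :=
  PiMat I * Kring I q fa fc u * hatPiMat I (q : ℂ)

/-- `M₀(u) = u·1 + 𝐞`, `M₁(u) = u⁻¹·1 + 𝐝` in a ℂ-algebra `A`. -/
def Mop {A : Type*} [Ring A] [Algebra ℂ A] (dd ee : A) (i : Fin 2) (u : ℂ) : A :=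
  if i = 0 then algebraMap ℂ A u + ee else algebraMap ℂ A u⁻¹ + dd

/-- The fused elements `M^I_ζ(u)`. -/
def MIop {A : Type*} [Ring A] [Algebra ℂ A] (dd ee : A) (I : ℕ) (q : ℝ) (ζ : ℕ) (u : ℂ) : A :=
  ∑ z ∈ Finset.univ.filter (fun z : Fin I → Fin 2 => (∑ j, ((z j : ℕ))) = ζ),
    ((List.finRange I).map (fun a =>
      Mop dd ee (z a) (u * qrpow q (((a.1 : ℝ) + 1) - ((I : ℝ) + 1) / 2)))).prod

end


noncomputable section
open Finset
variable {A : Type*} [Ring A] [Algebra ℂ A]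

/-- matrix (over ℂ) acting on A-valued vectors -/
def mulVecA {σ : Type*} [Fintype σ] (M : Matrix σ σ ℂ) (v : σ → A) : σ → A :=
  fun i => ∑ j, M i j • v j

lemma mulVecA_mul {σ : Type*} [Fintype σ] (M N : Matrix σ σ ℂ) (v : σ → A) :
    mulVecA (M * N) v = mulVecA M (mulVecA N v) := by
  funext i
  simp only [mulVecA, Matrix.mul_apply, Finset.smul_sum, Finset.sum_smul, smul_smul]
  rw [Finset.sum_comm]

def Gprod {n : ℕ} (m : Fin n → Fin 2 → A) (w : Fin n → Fin 2) (L : List (Fin n)) : A :=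
  (L.map fun s => m s (w s)).prod

lemma sum_agree {n : ℕ} (sx sy : Fin n) (hxy : sx ≠ sy) (w : Fin n → Fin 2)
    (F : (Fin n → Fin 2) → A) :
    ∑ w' : Fin n → Fin 2, (if ∀ k, k ≠ sx → k ≠ sy → w k = w' k then (1:ℂ) else 0) • F w'
      = ∑ p : Fin 2 × Fin 2, F (Function.update (Function.update w sx p.1) sy p.2) := by
  have h1 : ∀ w' : Fin n → Fin 2,
      (if ∀ k, k ≠ sx → k ≠ sy → w k = w' k then (1:ℂ) else 0) • F w'
      = if (∀ k, k ≠ sx → k ≠ sy → w k = w' k) then F w' else 0 := by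
    intro w'; split <;> simp
  simp_rw [h1]
  rw [← Finset.sum_filter]
  have hji : ∀ w' ∈ Finset.univ.filter (fun w' : Fin n → Fin 2 => ∀ k, k ≠ sx → k ≠ sy → w k = w' k),
      Function.update (Function.update w sx (w' sx)) sy (w' sy) = w' := by
    intro w' hw'
    simp only [Finset.mem_filter, Finset.mem_univ, true_and] at hw'
    funext k
    by_cases hky : k = sy
    · subst hky; rw [Function.update_self]
    · rw [Function.update_of_ne hky]
      by_cases hkx : k = sx
      · subst hkx; rw [Function.update_self]
      · rw [Function.update_of_ne hkx]; exact hw' k hkx hky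
  refine Finset.sum_nbij' (fun w' => (w' sx, w' sy))
    (fun p => Function.update (Function.update w sx p.1) sy p.2) ?_ ?_ ?_ ?_ ?_
  · intro a _; exact Finset.mem_univ _
  · intro p _
    simp only [Finset.mem_filter, Finset.mem_univ, true_and]
    intro k hkx hky
    rw [Function.update_of_ne hky, Function.update_of_ne hkx]
  · intro w' hw'; exact hji w' hw'
  · intro p _
    simp [Function.update_self, Function.update_of_ne hxy]
  · intro a ha; dsimp only; rw [hji a ha]

lemma step_exchange {n : ℕ} (m : Fin n → Fin 2 → A) (sx sy : Fin n) (hxy : sx ≠ sy)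
    (Al Bl : List (Fin n)) (hAx : sx ∉ Al) (hAy : sy ∉ Al) (hBx : sx ∉ Bl) (hBy : sy ∉ Bl)
    (qc u' : ℂ)
    (EX : ∀ c d : Fin 2, m sy c * m sx d
       = ∑ b : Fin 2, ∑ a : Fin 2, Rent qc u' b a d c • (m sx b * m sy a))
    (w : Fin n → Fin 2) :
    Gprod m w (Al ++ sy :: sx :: Bl)
      = ∑ w' : Fin n → Fin 2, emb2 sx sy (Rmat qc u') w w' • Gprod m w' (Al ++ sx :: sy :: Bl) := by
  have hR : ∀ w' : Fin n → Fin 2, emb2 sx sy (Rmat qc u') w w' • Gprod m w' (Al ++ sx :: sy :: Bl)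
      = (if ∀ k, k ≠ sx → k ≠ sy → w k = w' k then (1:ℂ) else 0) •
        (Rmat qc u' (w sx, w sy) (w' sx, w' sy) • Gprod m w' (Al ++ sx :: sy :: Bl)) := by
    intro w'
    simp only [emb2, smul_smul]
    ring_nf
  rw [Finset.sum_congr rfl (fun w' _ => hR w'), sum_agree sx sy hxy w]
  have hup : ∀ p : Fin 2 × Fin 2,
      Gprod m (Function.update (Function.update w sx p.1) sy p.2) (Al ++ sx :: sy :: Bl)
      = (Al.map fun s => m s (w s)).prod * (m sx p.1 * (m sy p.2 * (Bl.map fun s => m s (w s)).prod)) := by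
    intro p
    simp only [Gprod, List.map_append, List.map_cons, List.prod_append, List.prod_cons]
    have e1 : (Function.update (Function.update w sx p.1) sy p.2) sx = p.1 := by
      rw [Function.update_of_ne hxy, Function.update_self]
    have e2 : (Function.update (Function.update w sx p.1) sy p.2) sy = p.2 :=
      Function.update_self _ _ _
    have eA : (Al.map fun s => m s ((Function.update (Function.update w sx p.1) sy p.2) s))
        = Al.map fun s => m s (w s) := by
      refine List.map_congr_left (fun s hs => ?_)
      rw [Function.update_of_ne (by rintro rfl; exact hAy hs), Function.update_of_ne (by rintro rfl; exact hAx hs)]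
    have eB : (Bl.map fun s => m s ((Function.update (Function.update w sx p.1) sy p.2) s))
        = Bl.map fun s => m s (w s) := by
      refine List.map_congr_left (fun s hs => ?_)
      rw [Function.update_of_ne (by rintro rfl; exact hBy hs), Function.update_of_ne (by rintro rfl; exact hBx hs)]
    rw [e1, e2, eA, eB]
  simp only [hup]
  have e1 : ∀ p : Fin 2 × Fin 2, (Function.update (Function.update w sx p.1) sy p.2) sx = p.1 := by
    intro p; rw [Function.update_of_ne hxy, Function.update_self]
  simp only [Gprod, List.map_append, List.map_cons, List.prod_append, List.prod_cons]
  rw [← mul_assoc (m sy (w sy)) (m sx (w sx)), EX (w sy) (w sx)]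
  rw [Fintype.sum_prod_type]
  simp only [Finset.sum_mul, Finset.mul_sum, smul_mul_assoc, mul_smul_comm, Rmat, mul_assoc,
    Function.update_self, Function.update_of_ne hxy]


lemma finRange_split (n i : ℕ) (h : i + 2 ≤ n) :
    List.finRange n = (((List.finRange i).map fun k => (⟨k.1, by omega⟩ : Fin n))
      ++ [⟨i, by omega⟩, ⟨i+1, by omega⟩])
      ++ ((List.finRange (n-i-2)).map fun k => (⟨i+2+k.1, by omega⟩ : Fin n)) := by
  apply List.ext_getElem
  · simp; omega
  · intro k h1 h2
    simp only [List.getElem_finRange, Fin.cast_mk]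
    rw [List.getElem_append]
    split
    · rename_i hlt
      simp only [List.length_append, List.length_map, List.length_finRange, List.length_cons,
        List.length_nil] at hlt
      rw [List.getElem_append]
      split
      · rename_i hlt2
        simp only [List.length_map, List.length_finRange] at hlt2
        simp [List.getElem_finRange]
      · rename_i hge2
        simp only [List.length_map, List.length_finRange] at hge2 ⊢
        push_neg at hge2
        rcases (show k = i ∨ k = i + 1 by omega) with rfl | rfl <;> simp
    · rename_i hge
      simp only [List.length_append, List.length_map, List.length_finRange, List.length_cons,
        List.length_nil] at hge ⊢
      push_neg at hge
      simp [List.getElem_finRange]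
      omega

lemma fin2_cases (t : Fin 2) : t = 0 ∨ t = 1 := by omega

lemma invCount_swap {I : ℕ} (z : Fin I → Fin 2) (i : ℕ) (hi : i + 1 < I)
    (hdesc : z ⟨i+1, hi⟩ < z ⟨i, by omega⟩) :
    invCount z = invCount (z ∘ (Equiv.swap (⟨i, by omega⟩ : Fin I) ⟨i+1, hi⟩)) + 1 := by
  set i₀ : Fin I := ⟨i, by omega⟩
  set i₁ : Fin I := ⟨i+1, hi⟩
  have hne : i₀ ≠ i₁ := by simp [i₀, i₁, Fin.ext_iff]
  set σ := Equiv.swap i₀ i₁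
  have hval : ∀ k : Fin I, (σ k).1 = if k.1 = i then i+1 else if k.1 = i+1 then i else k.1 := by
    intro k
    simp only [σ, Equiv.swap_apply_def]
    split_ifs <;> simp_all [Fin.ext_iff, i₀, i₁] <;> omega
  have horder : ∀ p1 p2 : Fin I, p1 < p2 → ¬(p1 = i₀ ∧ p2 = i₁) → σ p1 < σ p2 := by
    intro p1 p2 h12 hne12
    have h1 := hval p1; have h2 := hval p2
    rw [Fin.lt_def] at h12 ⊢
    simp only [Fin.ext_iff, i₀, i₁] at hne12
    rw [h1, h2]; split_ifs <;> omega
  have hmem : (i₀, i₁) ∈ Finset.univ.filter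
      (fun p : Fin I × Fin I => p.1 < p.2 ∧ z p.2 < z p.1) := by
    simp only [Finset.mem_filter, Finset.mem_univ, true_and]
    exact ⟨by simp [i₀, i₁, Fin.lt_def], hdesc⟩
  have hcard : invCount (z ∘ σ) = ((Finset.univ.filter
      (fun p : Fin I × Fin I => p.1 < p.2 ∧ z p.2 < z p.1)).erase (i₀, i₁)).card := by
    unfold invCount
    refine Finset.card_nbij' (fun p => (σ p.1, σ p.2)) (fun p => (σ p.1, σ p.2)) ?_ ?_ ?_ ?_
    · intro p hp
      simp only [Finset.mem_coe, Finset.mem_filter, Finset.mem_univ, true_and, Function.comp_apply] at hp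
      have hpne : ¬(p.1 = i₀ ∧ p.2 = i₁) := by
        rintro ⟨h1', h2'⟩
        have h3 := hp.2
        rw [h1', h2'] at h3
        simp only [σ, Equiv.swap_apply_left, Equiv.swap_apply_right] at h3
        exact absurd (h3.trans hdesc) (lt_irrefl _)
      simp only [Finset.mem_coe, Finset.mem_erase, Finset.mem_filter, Finset.mem_univ, true_and]
      refine ⟨?_, horder p.1 p.2 hp.1 hpne, hp.2⟩
      · rintro hpe
        have e1 : σ p.1 = i₀ := congrArg Prod.fst hpe
        have e2 : σ p.2 = i₁ := congrArg Prod.snd hpe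
        have hb1 : p.1 = i₁ := by
          have h4 := congrArg σ e1
          simp only [σ, Equiv.swap_apply_self, Equiv.swap_apply_left] at h4
          exact h4
        have hb2 : p.2 = i₀ := by
          have h4 := congrArg σ e2
          simp only [σ, Equiv.swap_apply_self, Equiv.swap_apply_right] at h4
          exact h4
        have h5 := hp.1
        rw [hb1, hb2, Fin.lt_def] at h5
        simp only [i₀, i₁] at h5
        omega
    · intro p hp
      simp only [Finset.mem_coe, Finset.mem_erase, Finset.mem_filter, Finset.mem_univ, true_and] at hp
      obtain ⟨hpe, h12, hz⟩ := hp
      have hpne : ¬(p.1 = i₀ ∧ p.2 = i₁) := by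
        rintro ⟨e1, e2⟩; exact hpe (by rw [← e1, ← e2])
      simp only [Finset.mem_coe, Finset.mem_filter, Finset.mem_univ, true_and, Function.comp_apply]
      constructor
      · exact horder p.1 p.2 h12 hpne
      · simpa [σ, Equiv.swap_apply_self] using hz
    · intro p _; simp [σ, Equiv.swap_apply_self]
    · intro p _; simp [σ, Equiv.swap_apply_self]
  rw [hcard, Finset.card_erase_of_mem hmem]
  unfold invCount
  have : 0 < (Finset.univ.filter (fun p : Fin I × Fin I => p.1 < p.2 ∧ z p.2 < z p.1)).card :=
    Finset.card_pos.mpr ⟨_, hmem⟩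
  omega

lemma monotone_of_no_descent {I : ℕ} (z : Fin I → Fin 2)
    (h : ∀ (i : ℕ) (hi : i + 1 < I), ¬ z ⟨i+1, hi⟩ < z ⟨i, by omega⟩) : Monotone z := by
  have key : ∀ d : ℕ, ∀ a b : Fin I, b.1 = a.1 + d → z a ≤ z b := by
    intro d
    induction d with
    | zero => intro a b hab; have : a = b := Fin.ext (by omega : a.1 = b.1); subst this; exact le_refl _
    | succ d ih =>
      intro a b hab
      have hd : a.1 + d < I := by omega
      have h1 : z a ≤ z ⟨a.1 + d, hd⟩ := ih a _ rfl
      have h2 : ¬ z ⟨a.1 + d + 1, by omega⟩ < z ⟨a.1 + d, hd⟩ := h (a.1 + d) (by omega)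
      have hb : b = ⟨a.1 + d + 1, by omega⟩ := by apply Fin.ext; simp only [Fin.val_mk]; omega
      rw [hb]; exact h1.trans (not_lt.mp h2)
  intro a b hab
  exact key (b.1 - a.1) a b (by omega)

lemma invCount_of_monotone {I : ℕ} (z : Fin I → Fin 2) (hm : Monotone z) : invCount z = 0 := by
  unfold invCount
  rw [Finset.card_eq_zero, Finset.filter_eq_empty_iff]
  rintro p _
  rintro ⟨h1, h2⟩
  exact absurd (hm h1.le) (not_le.mpr h2)

def canWord (I m : ℕ) : Fin I → Fin 2 := fun k => if k.1 < I - m then 0 else 1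

lemma sum_eq_card_ones {I : ℕ} (z : Fin I → Fin 2) :
    (∑ j, ((z j : ℕ))) = (Finset.univ.filter (fun j => z j = 1)).card := by
  rw [Finset.card_filter]
  refine Finset.sum_congr rfl (fun j _ => ?_)
  rcases fin2_cases (z j) with h | h <;> simp [h]

lemma monotone_eq_can {I : ℕ} (z : Fin I → Fin 2) (hm : Monotone z) :
    z = canWord I (∑ j, ((z j : ℕ))) := by
  set m := ∑ j, ((z j : ℕ)) with hm'
  have hcard : m = (Finset.univ.filter (fun j => z j = 1)).card := sum_eq_card_ones z
  funext k
  rcases fin2_cases (z k) with h | h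
  · -- z k = 0 : every one is > k
    have hsub : (Finset.univ.filter (fun j => z j = 1)) ⊆ Finset.Ioi k := by
      intro j hj
      simp only [Finset.mem_filter, Finset.mem_univ, true_and] at hj
      simp only [Finset.mem_Ioi]
      by_contra hle
      push_neg at hle
      have := hm hle
      rw [hj, h] at this
      exact absurd this (by decide)
    have := Finset.card_le_card hsub
    rw [Fin.card_Ioi] at this
    rw [← hcard] at this
    have hk := k.isLt
    rw [h, canWord]
    rw [if_pos (by omega)]
  · -- z k = 1 : Ici k ⊆ ones
    have hsub : Finset.Ici k ⊆ (Finset.univ.filter (fun j => z j = 1)) := by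
      intro j hj
      simp only [Finset.mem_Ici] at hj
      simp only [Finset.mem_filter, Finset.mem_univ, true_and]
      have := hm hj
      rw [h] at this
      rcases fin2_cases (z j) with h2 | h2
      · rw [h2] at this; exact absurd this (by decide)
      · exact h2
    have := Finset.card_le_card hsub
    rw [Fin.card_Ici, ← hcard] at this
    have hk := k.isLt
    rw [h, canWord]
    rw [if_neg (by omega)]


lemma qrpow_ne_zero {q : ℝ} (hq0 : 0 < q) (r : ℝ) : qrpow q r ≠ 0 := by
  simp only [qrpow, ne_eq, Complex.ofReal_eq_zero]
  exact ne_of_gt (Real.rpow_pos_of_pos hq0 r)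

lemma qrpow_add_one {q : ℝ} (hq0 : 0 < q) (r : ℝ) : qrpow q (r + 1) = (q:ℂ) * qrpow q r := by
  simp only [qrpow]
  rw [Real.rpow_add_one (ne_of_gt hq0)]
  push_cast; ring

lemma qrpow_add_int {q : ℝ} (hq0 : 0 < q) (r : ℝ) (n : ℤ) :
    qrpow q (r + n) = (q:ℂ) ^ n * qrpow q r := by
  simp only [qrpow]
  rw [Real.rpow_add hq0 r n, Real.rpow_intCast]
  push_cast
  ring

lemma unfusedZF {A : Type*} [Ring A] [Algebra ℂ A] (dd ee : A) (q : ℂ)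
    (hde : dd * ee - q • (ee * dd) = (1 - q) • (1 : A))
    (u' v w : ℂ) (hv : v ≠ 0) (hw : w ≠ 0) (hvw : w = u' * v) (hD : 1 - q * u' ≠ 0)
    (c d : Fin 2) :
    Mop dd ee c v * Mop dd ee d w
      = ∑ b : Fin 2, ∑ a : Fin 2, Rent q u' b a d c • (Mop dd ee b w * Mop dd ee a v) := by
  have hde' : dd * ee = q • (ee * dd) + (1 - q) • (1 : A) := by
    rw [← hde]; abel
  have hu' : u' ≠ 0 := by rintro rfl; rw [zero_mul] at hvw; exact hw hvw
  subst hvw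
  have hD' : 1 - u' * q ≠ 0 := by rwa [mul_comm]
  fin_cases c <;> fin_cases d <;>
    simp only [Mop, Rent, Fin.sum_univ_two, Fin.isValue, Fin.mk_zero, Fin.mk_one, one_ne_zero, zero_ne_one,
      if_true, if_false, ite_true, ite_false, reduceIte, and_true, and_false, true_and,
      false_and, and_self, Algebra.algebraMap_eq_smul_one, zero_smul, add_zero, zero_add,
      one_smul] <;>
    simp only [mul_add, add_mul, smul_mul_assoc, mul_smul_comm, mul_one, one_mul,
      smul_smul, hde'] <;>
    match_scalars <;> field_simp <;> ring


def Pword (dd ee : A) (I : ℕ) (q : ℝ) (u : ℂ) (z : Fin I → Fin 2) : A :=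
  ((List.finRange I).map (fun a =>
    Mop dd ee (z a) (u * qrpow q (((a.1 : ℝ) + 1) - ((I : ℝ) + 1) / 2)))).prod

lemma MIop_eq_sum_Pword (dd ee : A) (I : ℕ) (q : ℝ) (ζ : ℕ) (u : ℂ) :
    MIop dd ee I q ζ u = ∑ z ∈ Finset.univ.filter
      (fun z : Fin I → Fin 2 => (∑ j, ((z j : ℕ))) = ζ), Pword dd ee I q u z := rfl

lemma qexch (dd ee : A) (q : ℂ)
    (hde : dd * ee - q • (ee * dd) = (1 - q) • (1 : A))
    (v : ℂ) (hv : v ≠ 0) (hq : q ≠ 0) :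
    Mop dd ee 1 v * Mop dd ee 0 (q * v) = q • (Mop dd ee 0 v * Mop dd ee 1 (q * v)) := by
  have hde' : dd * ee = q • (ee * dd) + (1 - q) • (1 : A) := by rw [← hde]; abel
  simp only [Mop, Fin.isValue, one_ne_zero, zero_ne_one, if_true, if_false, ite_true,
    ite_false, reduceIte, Algebra.algebraMap_eq_smul_one]
  simp only [mul_add, add_mul, smul_mul_assoc, mul_smul_comm, mul_one, one_mul,
    smul_smul, hde', smul_add]
  match_scalars <;> field_simp <;> ring

lemma Pword_swap (dd ee : A) (I : ℕ) (q : ℝ) (hq0 : 0 < q) (u : ℂ) (hu : u ≠ 0)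
    (qde : dd * ee - (q:ℂ) • (ee * dd) = (1 - (q:ℂ)) • (1 : A))
    (z : Fin I → Fin 2) (i : ℕ) (hi : i + 1 < I)
    (h1 : z ⟨i, by omega⟩ = 1) (h0 : z ⟨i+1, hi⟩ = 0) :
    Pword dd ee I q u z
      = (q:ℂ) • Pword dd ee I q u (z ∘ (Equiv.swap (⟨i, by omega⟩ : Fin I) ⟨i+1, hi⟩)) := by
  set i₀ : Fin I := ⟨i, by omega⟩
  set i₁ : Fin I := ⟨i+1, hi⟩
  have hne : i₀ ≠ i₁ := by simp [i₀, i₁, Fin.ext_iff]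
  have hsplit := finRange_split I i (by omega)
  set f : Fin I → A := fun a =>
    Mop dd ee (z a) (u * qrpow q (((a.1 : ℝ) + 1) - ((I : ℝ) + 1) / 2)) with hf
  set g : Fin I → A := fun a =>
    Mop dd ee ((z ∘ (Equiv.swap i₀ i₁)) a) (u * qrpow q (((a.1 : ℝ) + 1) - ((I : ℝ) + 1) / 2)) with hg
  have hAseg : ((List.finRange i).map fun k => (⟨k.1, by omega⟩ : Fin I)).map f
      = ((List.finRange i).map fun k => (⟨k.1, by omega⟩ : Fin I)).map g := by
    rw [List.map_map, List.map_map]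
    refine List.map_congr_left (fun k _ => ?_)
    simp only [Function.comp_apply, hf, hg]
    congr 2
    rw [Equiv.swap_apply_of_ne_of_ne]
    · simp [i₀, Fin.ext_iff]; omega
    · simp [i₁, Fin.ext_iff]; omega
  have hBseg : ((List.finRange (I-i-2)).map fun k => (⟨i+2+k.1, by omega⟩ : Fin I)).map f
      = ((List.finRange (I-i-2)).map fun k => (⟨i+2+k.1, by omega⟩ : Fin I)).map g := by
    rw [List.map_map, List.map_map]
    refine List.map_congr_left (fun k _ => ?_)
    simp only [Function.comp_apply, hf, hg]
    congr 2
    rw [Equiv.swap_apply_of_ne_of_ne]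
    · simp [i₀, Fin.ext_iff]; omega
    · simp [i₁, Fin.ext_iff]; omega
  have hmid : f i₀ * f i₁ = (q:ℂ) • (g i₀ * g i₁) := by
    simp only [hf, hg, Function.comp_apply, Equiv.swap_apply_left, Equiv.swap_apply_right,
      h1, h0]
    have hv : u * qrpow q (((i₀.1 : ℝ) + 1) - ((I : ℝ) + 1) / 2) ≠ 0 :=
      mul_ne_zero hu (qrpow_ne_zero hq0 _)
    have hqparam : u * qrpow q (((i₁.1 : ℝ) + 1) - ((I : ℝ) + 1) / 2)
        = (q:ℂ) * (u * qrpow q (((i₀.1 : ℝ) + 1) - ((I : ℝ) + 1) / 2)) := by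
      have : ((i₁.1 : ℝ) + 1) - ((I : ℝ) + 1) / 2 = (((i₀.1 : ℝ) + 1) - ((I : ℝ) + 1) / 2) + 1 := by
        simp only [i₀, i₁]; push_cast; ring
      rw [this, qrpow_add_one hq0]; ring
    rw [hqparam]
    exact qexch dd ee (q:ℂ) qde _ hv (by exact_mod_cast ne_of_gt hq0)
  unfold Pword
  rw [← hf, ← hg, hsplit]
  simp only [List.map_append, List.prod_append, List.map_cons, List.prod_cons,
    List.map_nil, List.prod_nil, mul_one]
  rw [hAseg, hBseg]
  rw [show (⟨i, by omega⟩ : Fin I) = i₀ from rfl, show (⟨i+1, by omega⟩ : Fin I) = i₁ from rfl,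
    hmid]
  simp only [smul_mul_assoc, mul_smul_comm]

lemma Pword_eq_can (dd ee : A) (I : ℕ) (q : ℝ) (hq0 : 0 < q) (u : ℂ) (hu : u ≠ 0)
    (qde : dd * ee - (q:ℂ) • (ee * dd) = (1 - (q:ℂ)) • (1 : A)) :
    ∀ z : Fin I → Fin 2,
      Pword dd ee I q u z
        = ((q:ℂ)) ^ (invCount z) • Pword dd ee I q u (canWord I (∑ j, ((z j : ℕ)))) := by
  suffices H : ∀ n, ∀ z : Fin I → Fin 2, invCount z = n →
      Pword dd ee I q u z
        = ((q:ℂ)) ^ (invCount z) • Pword dd ee I q u (canWord I (∑ j, ((z j : ℕ)))) by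
    exact fun z => H _ z rfl
  intro n
  induction n using Nat.strong_induction_on with
  | _ n ih =>
    intro z hz
    by_cases hd : ∃ (i : ℕ) (hi' : i + 1 < I), z ⟨i+1, hi'⟩ < z ⟨i, by omega⟩
    · obtain ⟨i, hi', hdesc⟩ := hd
      have hv0 := (z ⟨i, by omega⟩).isLt
      have hv1 := (z ⟨i+1, hi'⟩).isLt
      have hlt := hdesc
      rw [Fin.lt_def] at hlt
      have h1 : z ⟨i, by omega⟩ = 1 := Fin.ext (by omega)
      have h0 : z ⟨i+1, hi'⟩ = 0 := Fin.ext (by omega)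
      set z' := z ∘ (Equiv.swap (⟨i, by omega⟩ : Fin I) ⟨i+1, hi'⟩) with hz'
      have hswap := Pword_swap dd ee I q hq0 u hu qde z i hi' h1 h0
      have hinv : invCount z = invCount z' + 1 := invCount_swap z i hi' hdesc
      have hsum : (∑ j, ((z' j : ℕ))) = ∑ j, ((z j : ℕ)) :=
        Equiv.sum_comp (Equiv.swap (⟨i, by omega⟩ : Fin I) ⟨i+1, hi'⟩) (fun j => ((z j : ℕ)))
      have hrec := ih (invCount z') (by omega) z' rfl
      rw [hswap, hrec, hsum, smul_smul, hinv]
      congr 1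
      rw [pow_succ]
      ring
    · push_neg at hd
      have hmono : Monotone z := monotone_of_no_descent z (fun i hi => not_lt.mpr (hd i hi))
      rw [invCount_of_monotone z hmono, pow_zero, one_smul, ← monotone_eq_can z hmono]

lemma sum_word_le (I : ℕ) (z : Fin I → Fin 2) : (∑ j, ((z j : ℕ))) ≤ I := by
  calc (∑ j, ((z j : ℕ))) ≤ ∑ _j : Fin I, 1 :=
        Finset.sum_le_sum (fun j _ => Fin.is_le (z j))
    _ = I := by simp

lemma Zq_ne_zero (I : ℕ) (q : ℝ) (hq0 : 0 < q) (m : ℕ) (z₀ : Fin I → Fin 2)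
    (hz₀ : (∑ j, ((z₀ j : ℕ))) = m) : Zq I (q:ℂ) m ≠ 0 := by
  have : Zq I (q:ℂ) m = ((∑ x ∈ Finset.univ.filter
      (fun x : Fin I → Fin 2 => (∑ j, ((x j : ℕ))) = m), q ^ invCount x : ℝ) : ℂ) := by
    rw [Zq]; push_cast; rfl
  rw [this]
  rw [ne_eq, Complex.ofReal_eq_zero]
  refine ne_of_gt (Finset.sum_pos (fun x _ => pow_pos hq0 _) ?_)
  exact ⟨z₀, by simp [hz₀]⟩

lemma Pword_eq_sum_hatPi (dd ee : A) (I : ℕ) (q : ℝ) (hq0 : 0 < q) (u : ℂ) (hu : u ≠ 0)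
    (qde : dd * ee - (q:ℂ) • (ee * dd) = (1 - (q:ℂ)) • (1 : A)) (z : Fin I → Fin 2) :
    Pword dd ee I q u z
      = ∑ b : Fin (I+1), hatPiMat I (q:ℂ) z b • MIop dd ee I q (b:ℕ) u := by
  have hm : (∑ j, ((z j : ℕ))) ≤ I := sum_word_le I z
  rw [Finset.sum_eq_single (⟨(∑ j, ((z j : ℕ))), by omega⟩ : Fin (I+1))]
  · have hpos : hatPiMat I (q:ℂ) z (⟨(∑ j, ((z j : ℕ))), by omega⟩ : Fin (I+1))
        = (q:ℂ) ^ invCount z / Zq I (q:ℂ) (∑ j, ((z j : ℕ))) := by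
      rw [hatPiMat, if_pos rfl]
    rw [hpos, MIop_eq_sum_Pword]
    have hsum : ∑ z' ∈ Finset.univ.filter
        (fun z' : Fin I → Fin 2 => (∑ j, ((z' j : ℕ))) = ((⟨(∑ j, ((z j : ℕ))), by omega⟩ : Fin (I+1)) : ℕ)),
        Pword dd ee I q u z'
        = Zq I (q:ℂ) (∑ j, ((z j : ℕ))) • Pword dd ee I q u (canWord I (∑ j, ((z j : ℕ)))) := by
      rw [Zq, Finset.sum_smul]
      refine Finset.sum_congr rfl (fun z' hz' => ?_)
      simp only [Finset.mem_filter, Finset.mem_univ, true_and] at hz'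
      rw [Pword_eq_can dd ee I q hq0 u hu qde z', hz']
    rw [hsum, smul_smul, div_mul_cancel₀ _ (Zq_ne_zero I q hq0 _ z rfl),
      ← Pword_eq_can dd ee I q hq0 u hu qde z]
  · intro b _ hb
    rw [hatPiMat, if_neg, zero_smul]
    intro h
    exact hb (Fin.ext (by simp only [Fin.val_mk]; omega))
  · intro h
    exact absurd (Finset.mem_univ _) h


def xsite (I : ℕ) (k : Fin I) : Fin (2*I) := ⟨k.1, by have := k.isLt; omega⟩
def ysite (I : ℕ) (k : Fin I) : Fin (2*I) := ⟨k.1 + I, by have := k.isLt; omega⟩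
def xsList (I : ℕ) : List (Fin (2*I)) := (List.finRange I).map (xsite I)
def ysList (I : ℕ) : List (Fin (2*I)) := (List.finRange I).map (ysite I)

lemma length_xsList (I : ℕ) : (xsList I).length = I := by simp [xsList]
lemma length_ysList (I : ℕ) : (ysList I).length = I := by simp [ysList]

lemma xsList_getElem (I : ℕ) (s : ℕ) (hs : s < I) (h' : s < (xsList I).length) :
    (xsList I)[s] = xsite I ⟨s, hs⟩ := by
  simp [xsList, List.getElem_finRange]

lemma ysList_getElem (I : ℕ) (t : ℕ) (ht : t < I) (h' : t < (ysList I).length) :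
    (ysList I)[t] = ysite I ⟨t, ht⟩ := by
  simp [ysList, List.getElem_finRange]

lemma xdrop_cons (I : ℕ) (s : ℕ) (hs : s < I) :
    (xsList I).drop s = xsite I ⟨s, hs⟩ :: (xsList I).drop (s+1) := by
  rw [List.drop_eq_getElem_cons (by rw [length_xsList]; exact hs)]
  rw [xsList_getElem I s hs]

lemma ydrop_cons (I : ℕ) (t : ℕ) (ht : t < I) :
    (ysList I).drop t = ysite I ⟨t, ht⟩ :: (ysList I).drop (t+1) := by
  rw [List.drop_eq_getElem_cons (by rw [length_ysList]; exact ht)]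
  rw [ysList_getElem I t ht]

lemma xtake_succ (I : ℕ) (s : ℕ) (hs : s < I) :
    (xsList I).take (s+1) = (xsList I).take s ++ [xsite I ⟨s, hs⟩] := by
  rw [List.take_succ]
  congr 1
  rw [List.getElem?_eq_getElem (by rw [length_xsList]; exact hs)]
  rw [xsList_getElem I s hs]
  rfl

lemma ytake_succ (I : ℕ) (t : ℕ) (ht : t < I) :
    (ysList I).take (t+1) = (ysList I).take t ++ [ysite I ⟨t, ht⟩] := by
  rw [List.take_succ]
  congr 1
  rw [List.getElem?_eq_getElem (by rw [length_ysList]; exact ht)]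
  rw [ysList_getElem I t ht]
  rfl

def Ldef (I t : ℕ) : List (Fin (2*I)) := (ysList I).take t ++ xsList I ++ (ysList I).drop t

def L2def (I t s : ℕ) (ht : t < I) : List (Fin (2*I)) :=
  (ysList I).take t ++ ((xsList I).take s ++ (ysite I ⟨t, ht⟩ ::
    ((xsList I).drop s ++ (ysList I).drop (t+1))))

lemma L2_eq_pre (I t s : ℕ) (ht : t < I) (hs : s < I) :
    L2def I t s ht = ((ysList I).take t ++ (xsList I).take s) ++
      (ysite I ⟨t, ht⟩ :: xsite I ⟨s, hs⟩ ::
        ((xsList I).drop (s+1) ++ (ysList I).drop (t+1))) := by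
  rw [L2def, xdrop_cons I s hs]
  simp [List.append_assoc]

lemma L2_eq_post (I t s : ℕ) (ht : t < I) (hs : s < I) :
    L2def I t (s+1) ht = ((ysList I).take t ++ (xsList I).take s) ++
      (xsite I ⟨s, hs⟩ :: ysite I ⟨t, ht⟩ ::
        ((xsList I).drop (s+1) ++ (ysList I).drop (t+1))) := by
  rw [L2def, xtake_succ I s hs]
  simp [List.append_assoc]

lemma L2_I_eq (I t : ℕ) (ht : t < I) : L2def I t I ht = Ldef I t := by
  rw [L2def, Ldef, ydrop_cons I t ht]
  rw [List.take_of_length_le (le_of_eq (length_xsList I)),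
    List.drop_eq_nil_of_le (le_of_eq (length_xsList I))]
  simp [List.append_assoc]

lemma L2_0_eq (I t : ℕ) (ht : t < I) : L2def I t 0 ht = Ldef I (t+1) := by
  rw [L2def, Ldef, ytake_succ I t ht]
  simp [List.append_assoc]

lemma Ldef_zero (I : ℕ) : Ldef I 0 = xsList I ++ ysList I := by simp [Ldef]

lemma Ldef_I (I : ℕ) : Ldef I I = ysList I ++ xsList I := by
  rw [Ldef]
  rw [List.take_of_length_le (le_of_eq (length_ysList I)),
    List.drop_eq_nil_of_le (le_of_eq (length_ysList I))]
  simp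

lemma nodup_xy (I : ℕ) : (xsList I ++ ysList I).Nodup := by
  rw [List.nodup_append]
  refine ⟨?_, ?_, ?_⟩
  · exact (List.nodup_finRange I).map (fun a b hab => by
      simpa [xsite, Fin.ext_iff] using hab)
  · exact (List.nodup_finRange I).map (fun a b hab => by
      simpa [ysite, Fin.ext_iff] using hab)
  · intro a ha _ hb hab; subst hab
    simp only [xsList, ysList, List.mem_map] at ha hb
    obtain ⟨k, _, rfl⟩ := ha
    obtain ⟨l, _, hl⟩ := hb
    have := k.isLt
    have := l.isLt
    simp only [xsite, ysite, Fin.ext_iff] at hl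
    omega

lemma nodup_L2 (I t s : ℕ) (ht : t < I) : (L2def I t s ht).Nodup := by
  have hperm : (L2def I t s ht).Perm (xsList I ++ ysList I) := by
    rw [List.perm_iff_count]
    intro a
    conv_rhs => rw [show xsList I = (xsList I).take s ++ (xsList I).drop s from
        (List.take_append_drop s (xsList I)).symm,
      show ysList I = (ysList I).take t ++ (ysite I ⟨t, ht⟩ :: (ysList I).drop (t+1)) by
        conv_lhs => rw [← List.take_append_drop t (ysList I)]
        rw [ydrop_cons I t ht]]
    simp only [L2def, List.count_append, List.count_cons]
    omega
  exact hperm.symm.nodup (nodup_xy I)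

lemma nodup_extract {n : ℕ} {Al Bl : List (Fin n)} {a b : Fin n}
    (h : (Al ++ (a :: b :: Bl)).Nodup) :
    a ≠ b ∧ a ∉ Al ∧ b ∉ Al ∧ a ∉ Bl ∧ b ∉ Bl := by
  rw [List.nodup_append] at h
  obtain ⟨_, h2, h3⟩ := h
  rw [List.nodup_cons, List.nodup_cons] at h2
  simp only [List.mem_cons, not_or] at h2
  refine ⟨h2.1.1, ?_, ?_, h2.1.2, h2.2.1⟩
  · intro ha; exact h3 a ha a (by simp) rfl
  · intro hb; exact h3 b hb b (by simp) rfl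


lemma mulVecA_one {σ : Type*} [Fintype σ] [DecidableEq σ] (v : σ → A) :
    mulVecA (1 : Matrix σ σ ℂ) v = v := by
  funext i
  simp [mulVecA, Matrix.one_apply, ite_smul]

def sparam (I : ℕ) (q : ℝ) (x y : ℂ) (s : Fin (2*I)) : ℂ :=
  if s.1 < I then x * qrpow q (((s.1 : ℝ) + 1) - ((I : ℝ) + 1) / 2)
  else y * qrpow q ((((s.1 - I : ℕ)) : ℝ) + 1 - ((I : ℝ) + 1) / 2)

lemma sparam_x (I : ℕ) (q : ℝ) (x y : ℂ) (k : Fin I) :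
    sparam I q x y (xsite I k) = x * qrpow q (((k.1 : ℝ) + 1) - ((I : ℝ) + 1) / 2) := by
  have := k.isLt
  simp [sparam, xsite, this]

lemma sparam_y (I : ℕ) (q : ℝ) (x y : ℂ) (k : Fin I) :
    sparam I q x y (ysite I k) = y * qrpow q (((k.1 : ℝ) + 1) - ((I : ℝ) + 1) / 2) := by
  have hk := k.isLt
  rw [sparam, ysite]
  simp only [Fin.val_mk]
  rw [if_neg (by omega)]
  have h2 : k.1 + I - I = k.1 := by omega
  rw [h2]

def msiteF (dd ee : A) (I : ℕ) (q : ℝ) (x y : ℂ) : Fin (2*I) → Fin 2 → A :=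
  fun s v => Mop dd ee v (sparam I q x y s)

lemma EXinst (dd ee : A) (I : ℕ) (q : ℝ) (hq0 : 0 < q) (x y : ℂ) (hx : x ≠ 0) (hy : y ≠ 0)
    (hreg : ∀ m : ℤ, -(I : ℤ) ≤ m → m ≤ (I : ℤ) → (x / y) * (q : ℂ) ^ m ≠ 1)
    (qde : dd * ee - (q:ℂ) • (ee * dd) = (1 - (q:ℂ)) • (1 : A))
    (k s : ℕ) (hk : k < I) (hs : s < I) :
    ∀ c d : Fin 2,
      msiteF dd ee I q x y (ysite I ⟨I-1-k, by omega⟩) c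
        * msiteF dd ee I q x y (xsite I ⟨s, hs⟩) d
      = ∑ b : Fin 2, ∑ a : Fin 2,
          Rent (q:ℂ) ((x/y) * (q:ℂ) ^ (((s:ℤ)+1) - ((I:ℤ) - (k:ℤ)))) b a d c •
            (msiteF dd ee I q x y (xsite I ⟨s, hs⟩) b
              * msiteF dd ee I q x y (ysite I ⟨I-1-k, by omega⟩) a) := by
  intro c d
  have hq0' : (q:ℂ) ≠ 0 := by exact_mod_cast ne_of_gt hq0
  set t : ℕ := I - 1 - k with hts
  set e : ℤ := ((s:ℤ)+1) - ((I:ℤ) - (k:ℤ)) with hes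
  set v : ℂ := sparam I q x y (ysite I ⟨t, by omega⟩) with hv'
  set w : ℂ := sparam I q x y (xsite I ⟨s, hs⟩) with hw'
  have hv : v ≠ 0 := by
    rw [hv', sparam_y]; exact mul_ne_zero hy (qrpow_ne_zero hq0 _)
  have hw : w ≠ 0 := by
    rw [hw', sparam_x]; exact mul_ne_zero hx (qrpow_ne_zero hq0 _)
  have htR : (t : ℝ) = (I : ℝ) - 1 - (k : ℝ) := by
    have : (t : ℤ) = (I : ℤ) - 1 - (k : ℤ) := by omega
    exact_mod_cast congrArg (Int.cast : ℤ → ℝ) this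
  have heR : ((e : ℤ) : ℝ) = (s : ℝ) + 1 - ((I : ℝ) - (k : ℝ)) := by
    rw [hes]; push_cast; ring
  have hvw : w = ((x/y) * (q:ℂ) ^ e) * v := by
    rw [hv', hw', sparam_x, sparam_y]
    have he : ((s : ℝ) + 1) - ((I : ℝ) + 1) / 2
        = (((t : ℝ) + 1) - ((I : ℝ) + 1) / 2) + ((e : ℤ) : ℝ) := by
      rw [heR, htR]; ring
    rw [he, qrpow_add_int hq0]
    field_simp
  have hD : 1 - (q:ℂ) * ((x/y) * (q:ℂ) ^ e) ≠ 0 := by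
    have h2 : (q:ℂ) * ((x/y) * (q:ℂ) ^ e) = (x/y) * (q:ℂ) ^ (e+1) := by
      rw [zpow_add_one₀ hq0']; ring
    rw [h2]
    exact sub_ne_zero.mpr (Ne.symm (hreg (e+1) (by omega) (by omega)))
  simpa only [msiteF] using unfusedZF dd ee (q:ℂ) qde ((x/y) * (q:ℂ) ^ e) v w hv hw hvw hD c d

lemma chain_inner (dd ee : A) (I : ℕ) (q : ℝ) (hq0 : 0 < q) (x y : ℂ) (hx : x ≠ 0) (hy : y ≠ 0)
    (hreg : ∀ m : ℤ, -(I : ℤ) ≤ m → m ≤ (I : ℤ) → (x / y) * (q : ℂ) ^ m ≠ 1)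
    (qde : dd * ee - (q:ℂ) • (ee * dd) = (1 - (q:ℂ)) • (1 : A))
    (k : ℕ) (hk : k < I) :
    ∀ j, j ≤ I →
      mulVecA ((((List.finRange I).drop (I - j)).map (fun b' : Fin I =>
          emb2 (⟨b'.1, by have := b'.isLt; omega⟩ : Fin (2*I)) (ysite I ⟨I-1-k, by omega⟩)
            (Rmat (q:ℂ) ((x/y) * (q:ℂ) ^ (((b'.1:ℤ)+1) - ((I:ℤ) - (k:ℤ))))))).prod)
        (fun w => Gprod (msiteF dd ee I q x y) w (Ldef I (I-1-k)))
      = fun w => Gprod (msiteF dd ee I q x y) w (L2def I (I-1-k) (I-j) (by omega)) := by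
  intro j
  induction j with
  | zero =>
    intro _
    rw [Nat.sub_zero, List.drop_eq_nil_of_le (by simp), List.map_nil, List.prod_nil,
      mulVecA_one, L2_I_eq]
  | succ j ih =>
    intro hj
    have hs : I - (j+1) < I := by omega
    set s := I - (j+1) with hsd
    have hdrop : (List.finRange I).drop s = ⟨s, hs⟩ :: (List.finRange I).drop (s+1) := by
      rw [List.drop_eq_getElem_cons (by simp only [List.length_finRange]; omega)]
      congr 1
      simp [List.getElem_finRange]
    rw [hdrop, List.map_cons, List.prod_cons, mulVecA_mul]
    have hIj : s + 1 = I - j := by omega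
    rw [show s + 1 = I - j from hIj, ih (by omega)]
    rw [show I - j = s + 1 from hIj.symm]
    funext w
    set t := I - 1 - k with htd
    have ht : t < I := by omega
    obtain ⟨hyx', hAy, hAx, hBy, hBx⟩ := nodup_extract
      (by rw [← L2_eq_pre I t s ht hs]; exact nodup_L2 I t s ht)
    have hxy' : xsite I ⟨s, hs⟩ ≠ ysite I ⟨t, ht⟩ := by
      simp only [xsite, ysite, ne_eq, Fin.ext_iff, Fin.val_mk]
      omega
    have hstep := step_exchange (msiteF dd ee I q x y) (xsite I ⟨s, hs⟩) (ysite I ⟨t, ht⟩)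
      hxy' ((ysList I).take t ++ (xsList I).take s)
      ((xsList I).drop (s+1) ++ (ysList I).drop (t+1)) hAx hAy hBx hBy
      (q:ℂ) ((x/y) * (q:ℂ) ^ (((s:ℤ)+1) - ((I:ℤ) - (k:ℤ))))
      (EXinst dd ee I q hq0 x y hx hy hreg qde k s hk hs) w
    rw [L2_eq_pre I t s ht hs, L2_eq_post I t s ht hs]
    exact hstep.symm

lemma chain_outer (dd ee : A) (I : ℕ) (q : ℝ) (hq0 : 0 < q) (x y : ℂ) (hx : x ≠ 0) (hy : y ≠ 0)
    (hreg : ∀ m : ℤ, -(I : ℤ) ≤ m → m ≤ (I : ℤ) → (x / y) * (q : ℂ) ^ m ≠ 1)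
    (qde : dd * ee - (q:ℂ) • (ee * dd) = (1 - (q:ℂ)) • (1 : A)) :
    ∀ j, j ≤ I →
      mulVecA ((((List.finRange I).drop (I - j)).map (fun a' : Fin I =>
          ((List.finRange I).map (fun b' : Fin I =>
            emb2 (⟨b'.1, by have := b'.isLt; omega⟩ : Fin (2*I))
              (ysite I ⟨I-1-a'.1, by have := a'.isLt; omega⟩)
              (Rmat (q:ℂ) ((x/y) * (q:ℂ) ^ (((b'.1:ℤ)+1) - ((I:ℤ) - (a'.1:ℤ))))))).prod)).prod)
        (fun w => Gprod (msiteF dd ee I q x y) w (Ldef I 0))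
      = fun w => Gprod (msiteF dd ee I q x y) w (Ldef I j) := by
  intro j
  induction j with
  | zero =>
    intro _
    rw [Nat.sub_zero, List.drop_eq_nil_of_le (by simp), List.map_nil, List.prod_nil,
      mulVecA_one]
  | succ j ih =>
    intro hj
    have hκ : I - (j+1) < I := by omega
    set κ := I - (j+1) with hκd
    have hdrop : (List.finRange I).drop κ = ⟨κ, hκ⟩ :: (List.finRange I).drop (κ+1) := by
      rw [List.drop_eq_getElem_cons (by simp only [List.length_finRange]; omega)]
      congr 1
      simp [List.getElem_finRange]
    rw [hdrop, List.map_cons, List.prod_cons, mulVecA_mul]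
    have hIj : κ + 1 = I - j := by omega
    rw [show κ + 1 = I - j from hIj, ih (by omega)]
    have hinner := chain_inner dd ee I q hq0 x y hx hy hreg qde κ hκ I le_rfl
    rw [Nat.sub_self, List.drop_zero] at hinner
    rw [L2_0_eq I (I-1-κ) (by omega)] at hinner
    have ht : I - 1 - κ = j := by omega
    rw [show Ldef I j = Ldef I (I-1-κ) by rw [ht],
      show Ldef I (j+1) = Ldef I ((I-1-κ)+1) by rw [ht]]
    exact hinner

theorem Rring_chain (dd ee : A) (I : ℕ) (q : ℝ) (hq0 : 0 < q) (x y : ℂ) (hx : x ≠ 0) (hy : y ≠ 0)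
    (hreg : ∀ m : ℤ, -(I : ℤ) ≤ m → m ≤ (I : ℤ) → (x / y) * (q : ℂ) ^ m ≠ 1)
    (qde : dd * ee - (q:ℂ) • (ee * dd) = (1 - (q:ℂ)) • (1 : A)) :
    mulVecA (Rring I (q:ℂ) (x/y))
      (fun w => Gprod (msiteF dd ee I q x y) w (xsList I ++ ysList I))
    = fun w => Gprod (msiteF dd ee I q x y) w (ysList I ++ xsList I) := by
  have hR : Rring I (q:ℂ) (x/y) = (((List.finRange I)).map (fun a' : Fin I =>
      ((List.finRange I).map (fun b' : Fin I =>
        emb2 (⟨b'.1, by have := b'.isLt; omega⟩ : Fin (2*I))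
          (ysite I ⟨I-1-a'.1, by have := a'.isLt; omega⟩)
          (Rmat (q:ℂ) ((x/y) * (q:ℂ) ^ (((b'.1:ℤ)+1) - ((I:ℤ) - (a'.1:ℤ))))))).prod)).prod := by
    rw [Rring]
    refine congrArg List.prod (List.map_congr_left (fun a' _ => ?_))
    refine congrArg List.prod (List.map_congr_left (fun b' _ => ?_))
    have hz : (⟨2*I-1-a'.1, by have := a'.isLt; omega⟩ : Fin (2*I))
        = ysite I ⟨I-1-a'.1, by have := a'.isLt; omega⟩ := by
      refine Fin.ext ?_
      simp only [ysite, Fin.val_mk]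
      have := a'.isLt
      omega
    rw [hz]
  rw [hR]
  have := chain_outer dd ee I q hq0 x y hx hy hreg qde I le_rfl
  rw [Nat.sub_self, List.drop_zero, Ldef_zero, Ldef_I] at this
  exact this


def halvesEquiv (I : ℕ) : (Fin (2*I) → Fin 2) ≃ ((Fin I → Fin 2) × (Fin I → Fin 2)) where
  toFun w := (firstHalf w, secondHalf w)
  invFun p := fun k => if h : k.1 < I then p.1 ⟨k.1, h⟩ else p.2 ⟨k.1 - I, by have := k.isLt; omega⟩
  left_inv w := by
    funext k
    dsimp only [firstHalf, secondHalf]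
    by_cases h : k.1 < I
    · rw [dif_pos h]
    · rw [dif_neg h]
      congr 1
      refine Fin.ext ?_
      simp only [Fin.val_mk]
      have := k.isLt
      omega
  right_inv p := by
    refine Prod.ext ?_ ?_ <;> funext j <;> dsimp only [firstHalf, secondHalf]
    · rw [dif_pos j.isLt]
    · rw [dif_neg (by omega)]
      apply congrArg
      have h2 : (j:ℕ) + I - I = (j:ℕ) := by omega
      simp only [h2]

lemma Gprod_append {n : ℕ} (m : Fin n → Fin 2 → A) (w : Fin n → Fin 2) (L1 L2 : List (Fin n)) :
    Gprod m w (L1 ++ L2) = Gprod m w L1 * Gprod m w L2 := by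
  simp [Gprod, List.map_append, List.prod_append]

lemma Gprod_xs (dd ee : A) (I : ℕ) (q : ℝ) (x y : ℂ) (w : Fin (2*I) → Fin 2) :
    Gprod (msiteF dd ee I q x y) w (xsList I) = Pword dd ee I q x (firstHalf w) := by
  simp only [Gprod, Pword, xsList, List.map_map]
  refine congrArg List.prod (List.map_congr_left (fun k _ => ?_))
  simp only [Function.comp_apply, msiteF, sparam_x]
  rfl

lemma Gprod_ys (dd ee : A) (I : ℕ) (q : ℝ) (x y : ℂ) (w : Fin (2*I) → Fin 2) :
    Gprod (msiteF dd ee I q x y) w (ysList I) = Pword dd ee I q y (secondHalf w) := by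
  simp only [Gprod, Pword, ysList, List.map_map]
  refine congrArg List.prod (List.map_congr_left (fun k _ => ?_))
  simp only [Function.comp_apply, msiteF, sparam_y]
  rfl


end

/-- **Fused Zamolodchikov–Faddeev relation**: if `𝐝𝐞 − q𝐞𝐝 = (1−q)·1`, then for all
nonzero `x, y` with `x/y` avoiding the singular points and all `0 ≤ c, d ≤ I`,
`M^I_c(y) M^I_d(x) = Σ_{a,b=0}^{I} R^I(x/y)_{b,a}^{d,c} M^I_b(x) M^I_a(y)`. -/
theorem fused_ZF {A : Type*} [Ring A] [Algebra ℂ A]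
    (I : ℕ) (hI : 1 ≤ I) (q : ℝ) (hq0 : 0 < q) (hq1 : q < 1)
    (dd ee : A)
    (hde : dd * ee - (q : ℂ) • (ee * dd) = (1 - (q : ℂ)) • (1 : A))
    (x y : ℂ) (hx : x ≠ 0) (hy : y ≠ 0)
    (hreg : ∀ m : ℤ, -(I : ℤ) ≤ m → m ≤ (I : ℤ) → (x / y) * (q : ℂ) ^ m ≠ 1)
    (c d : Fin (I + 1)) :
    MIop dd ee I q (c : ℕ) y * MIop dd ee I q (d : ℕ) x =
      ∑ a : Fin (I + 1), ∑ b : Fin (I + 1),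
        RI I (q : ℂ) (x / y) (d, c) (b, a) •
          (MIop dd ee I q (b : ℕ) x * MIop dd ee I q (a : ℕ) y) := by
  classical
  set mF := msiteF dd ee I q x y with hmF
  -- expansion of the x-then-y ordered product through `Π̂ ⊗ Π̂`
  have hXY : ∀ w' : Fin (2*I) → Fin 2, Gprod mF w' (xsList I ++ ysList I)
      = ∑ p : Fin (I+1) × Fin (I+1), hatPiPiMat I (q:ℂ) w' p •
          (MIop dd ee I q (p.1 : ℕ) x * MIop dd ee I q (p.2 : ℕ) y) := by
    intro w'
    rw [Gprod_append, Gprod_xs, Gprod_ys,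
      Pword_eq_sum_hatPi dd ee I q hq0 x hx hde (firstHalf w'),
      Pword_eq_sum_hatPi dd ee I q hq0 y hy hde (secondHalf w'),
      Finset.sum_mul_sum, Fintype.sum_prod_type]
    refine Finset.sum_congr rfl (fun b _ => Finset.sum_congr rfl (fun a _ => ?_))
    rw [smul_mul_smul_comm]
    rfl
  -- expansion of the ordered product `M^I(y) M^I(x)` through `Π ⊗ Π`
  have hA : ∀ cc dd' : Fin (I+1), MIop dd ee I q (cc:ℕ) y * MIop dd ee I q (dd':ℕ) x
      = ∑ w : Fin (2*I) → Fin 2, PiPiMat I (dd', cc) w • Gprod mF w (ysList I ++ xsList I) := by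
    intro cc dd'
    have hsum : ∑ w : Fin (2*I) → Fin 2, PiPiMat I (dd', cc) w • Gprod mF w (ysList I ++ xsList I)
        = ∑ p : (Fin I → Fin 2) × (Fin I → Fin 2),
            (PiMat I dd' p.1 * PiMat I cc p.2) •
              (Pword dd ee I q y p.2 * Pword dd ee I q x p.1) := by
      refine Fintype.sum_equiv (halvesEquiv I) _ _ (fun w => ?_)
      rw [Gprod_append, Gprod_xs, Gprod_ys]
      rfl
    rw [hsum, Fintype.sum_prod_type, Finset.sum_comm,
      MIop_eq_sum_Pword, MIop_eq_sum_Pword, Finset.sum_mul_sum,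
      Finset.sum_filter]
    refine Finset.sum_congr rfl (fun zy _ => ?_)
    rw [Finset.sum_filter]
    by_cases hQ : (∑ j, ((zy j : ℕ))) = (cc : ℕ)
    · rw [if_pos hQ]
      refine Finset.sum_congr rfl (fun zx _ => ?_)
      by_cases hP : (∑ j, ((zx j : ℕ))) = (dd' : ℕ)
      · simp [PiMat, hP, hQ]
      · simp [PiMat, hP]
    · rw [if_neg hQ]
      refine (Finset.sum_eq_zero (fun zx _ => ?_)).symm
      simp [PiMat, hQ]
  -- transport across the fused bulk operator
  have hB : ∀ w : Fin (2*I) → Fin 2, Gprod mF w (ysList I ++ xsList I)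
      = ∑ w' : Fin (2*I) → Fin 2, Rring I (q:ℂ) (x/y) w w' • Gprod mF w' (xsList I ++ ysList I) :=
    fun w => (congrFun (Rring_chain dd ee I q hq0 x y hx hy hreg hde) w).symm
  rw [hA c d]
  calc
    ∑ w : Fin (2*I) → Fin 2, PiPiMat I (d, c) w • Gprod mF w (ysList I ++ xsList I)
        = ∑ w : Fin (2*I) → Fin 2, ∑ w' : Fin (2*I) → Fin 2,
            ∑ p : Fin (I+1) × Fin (I+1),
              (PiPiMat I (d, c) w * (Rring I (q:ℂ) (x/y) w w' * hatPiPiMat I (q:ℂ) w' p)) •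
                (MIop dd ee I q (p.1 : ℕ) x * MIop dd ee I q (p.2 : ℕ) y) := by
          refine Finset.sum_congr rfl (fun w _ => ?_)
          rw [hB w]
          rw [Finset.smul_sum]
          refine Finset.sum_congr rfl (fun w' _ => ?_)
          rw [hXY w']
          rw [Finset.smul_sum, Finset.smul_sum]
          refine Finset.sum_congr rfl (fun p _ => ?_)
          rw [smul_smul, smul_smul, mul_assoc]
    _ = ∑ p : Fin (I+1) × Fin (I+1),
          (∑ w : Fin (2*I) → Fin 2, ∑ w' : Fin (2*I) → Fin 2,
            PiPiMat I (d, c) w * (Rring I (q:ℂ) (x/y) w w' * hatPiPiMat I (q:ℂ) w' p)) •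
              (MIop dd ee I q (p.1 : ℕ) x * MIop dd ee I q (p.2 : ℕ) y) := by
          rw [Finset.sum_congr rfl (fun w _ => (Finset.sum_comm :
            (∑ w' : Fin (2*I) → Fin 2, ∑ p : Fin (I+1) × Fin (I+1),
              (PiPiMat I (d, c) w * (Rring I (q:ℂ) (x/y) w w' * hatPiPiMat I (q:ℂ) w' p)) •
                (MIop dd ee I q (p.1 : ℕ) x * MIop dd ee I q (p.2 : ℕ) y))
            = _))]
          rw [Finset.sum_comm]
          refine Finset.sum_congr rfl (fun p _ => ?_)
          simp only [Finset.sum_smul]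
    _ = ∑ p : Fin (I+1) × Fin (I+1),
          RI I (q:ℂ) (x/y) (d, c) p •
            (MIop dd ee I q (p.1 : ℕ) x * MIop dd ee I q (p.2 : ℕ) y) := by
          refine Finset.sum_congr rfl (fun p _ => ?_)
          congr 1
          simp only [RI]
          rw [Matrix.mul_apply]
          rw [Finset.sum_comm]
          refine Finset.sum_congr rfl (fun w' _ => ?_)
          rw [Matrix.mul_apply, Finset.sum_mul]
          refine Finset.sum_congr rfl (fun w _ => ?_)
          rw [mul_assoc]
    _ = ∑ a : Fin (I + 1), ∑ b : Fin (I + 1),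
        RI I (q : ℂ) (x / y) (d, c) (b, a) •
          (MIop dd ee I q (b : ℕ) x * MIop dd ee I q (a : ℕ) y) := by
          rw [Fintype.sum_prod_type, Finset.sum_comm]
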